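/- Let y ∈ ℝ₊^{2m+1} have strictly positive components and let x⁰ ∈ ℝ^{m+1} be strictly positive; define the iterates x^{t+1} = T(x^t) for t ≥ 0 (they remain strictly positive). Then lim_{t→∞} I(x^{t+1}‖x^t) = 0 and lim_{t→∞} Σ_{j=0}^{m} |x^{t+1}_j − x^t_j| = 0. -/

import Mathlib

open Finset Filter

/-- Extension of `x : Fin (m+1) → ℝ` to `ℕ`, zero outside `[0, m]`. -/
def ext (m : ℕ) (x : Fin (m + 1) → ℝ) (k : ℕ) : ℝ :=
  if h : k < m + 1 then x ⟨k, h⟩ else 0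

/-- Autoconvolution `(x*x)_i = ∑_{j=0}^{i} x_{i-j} x_j`. -/
def aconv (m : ℕ) (x : Fin (m + 1) → ℝ) : Fin (2 * m + 1) → ℝ :=
  fun i => ∑ j ∈ Finset.range (i.1 + 1), ext m x (i.1 - j) * ext m x j

/-- The index `ℓ + j ∈ {0,…,2m}` for `ℓ, j ∈ {0,…,m}`. -/
def idx (m : ℕ) (ℓ j : Fin (m + 1)) : Fin (2 * m + 1) :=
  ⟨ℓ.1 + j.1, by have h1 := ℓ.isLt; have h2 := j.isLt; omega⟩

/-- One term of the I-divergence, with values in `[0,∞]`, with the conventions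
`0·log(0/b) = 0` and value `∞` if `a > 0 = b`. -/
noncomputable def termDiv (a b : ℝ) : ENNReal :=
  if a = 0 then ENNReal.ofReal b
  else if b = 0 then ⊤
  else ENNReal.ofReal (a * Real.log (a / b) - a + b)

/-- `[0,∞]`-valued I-divergence between vectors. -/
noncomputable def Idiv {n : ℕ} (u v : Fin n → ℝ) : ENNReal :=
  ∑ i, termDiv (u i) (v i)

/-- Real-valued I-divergence between vectors (used when the second argument is
positive wherever the first one is). -/
noncomputable def IdivR {n : ℕ} (u v : Fin n → ℝ) : ℝ :=
  ∑ i, (u i * Real.log (u i / v i) - u i + v i)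

/-- `[0,∞]`-valued I-divergence between `(2m+1) × (m+1)` matrices. -/
noncomputable def IdivM (m : ℕ) (M N : Fin (2 * m + 1) → Fin (m + 1) → ℝ) : ENNReal :=
  ∑ i, ∑ j, termDiv (M i j) (N i j)

/-- Real-valued I-divergence between `(2m+1) × (m+1)` matrices. -/
noncomputable def IdivMR (m : ℕ) (M N : Fin (2 * m + 1) → Fin (m + 1) → ℝ) : ℝ :=
  ∑ i, ∑ j, (M i j * Real.log (M i j / N i j) - M i j + N i j)

/-- The set 𝒴: nonnegative matrices supported on `{(i,j) : j ≤ i ≤ j+m}` with row sums `y`. -/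
def calY (m : ℕ) (y : Fin (2 * m + 1) → ℝ) (Y : Fin (2 * m + 1) → Fin (m + 1) → ℝ) : Prop :=
  (∀ i j, 0 ≤ Y i j) ∧
  (∀ (i : Fin (2 * m + 1)) (j : Fin (m + 1)), ¬(j.1 ≤ i.1 ∧ i.1 ≤ j.1 + m) → Y i j = 0) ∧
  (∀ i, ∑ j, Y i j = y i)

/-- The matrix `W(x)` with `W(x)_{ij} = x_{i-j} x_j` on the support and `0` elsewhere. -/
def Wmat (m : ℕ) (x : Fin (m + 1) → ℝ) (i : Fin (2 * m + 1)) (j : Fin (m + 1)) : ℝ :=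
  if h : j.1 ≤ i.1 ∧ i.1 ≤ j.1 + m then x ⟨i.1 - j.1, by omega⟩ * x j else 0

/-- The matrix `Y*(x)` with `Y*(x)_{ij} = (x_{i-j} x_j/(x*x)_i)·y_i` on the support. -/
noncomputable def Ystar (m : ℕ) (y : Fin (2 * m + 1) → ℝ) (x : Fin (m + 1) → ℝ)
    (i : Fin (2 * m + 1)) (j : Fin (m + 1)) : ℝ :=
  if h : j.1 ≤ i.1 ∧ i.1 ≤ j.1 + m then
    x ⟨i.1 - j.1, by omega⟩ * x j / aconv m x i * y i
  else 0

/-- `Ŷ_j = ∑_{i=0}^{m} Y_{i+j,i} + ∑_{i=j}^{j+m} Y_{ij}`. -/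
def Yhat (m : ℕ) (Y : Fin (2 * m + 1) → Fin (m + 1) → ℝ) (j : Fin (m + 1)) : ℝ :=
  (∑ ℓ : Fin (m + 1), Y (idx m ℓ j) ℓ) + ∑ ℓ : Fin (m + 1), Y (idx m ℓ j) j

/-- The algorithm map `T(x)_j = x_j (1/c) ∑_ℓ x_ℓ y_{ℓ+j}/(x*x)_{ℓ+j}`,
with `c = √(∑ y_i)`. -/
noncomputable def Tmap (m : ℕ) (y : Fin (2 * m + 1) → ℝ) (x : Fin (m + 1) → ℝ)
    (j : Fin (m + 1)) : ℝ :=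
  x j * (1 / Real.sqrt (∑ i, y i)) * ∑ ℓ, x ℓ * y (idx m ℓ j) / aconv m x (idx m ℓ j)

/-- The gradient `∇_j I(x) = 2 ∑_ℓ ( x_ℓ − x_ℓ y_{ℓ+j}/(x*x)_{ℓ+j} )`. -/
noncomputable def gradI (m : ℕ) (y : Fin (2 * m + 1) → ℝ) (x : Fin (m + 1) → ℝ)
    (j : Fin (m + 1)) : ℝ :=
  2 * ∑ ℓ, (x ℓ - x ℓ * y (idx m ℓ j) / aconv m x (idx m ℓ j))

lemma ext_nonneg (m : ℕ) (x : Fin (m+1) → ℝ) (hx : ∀ j, 0 ≤ x j) (k : ℕ) :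
    0 ≤ ext m x k := by
  unfold _root_.ext; split <;> simp [hx _]

lemma ext_zero (m : ℕ) (x : Fin (m+1) → ℝ) {k : ℕ} (h : m < k) : ext m x k = 0 := by
  unfold _root_.ext; rw [dif_neg]; omega

lemma ext_pos (m : ℕ) (x : Fin (m+1) → ℝ) (hx : ∀ j, 0 < x j) {k : ℕ} (h : k ≤ m) :
    0 < ext m x k := by
  unfold _root_.ext; rw [dif_pos (by omega)]; exact hx _

lemma aconv_pos (m : ℕ) (x : Fin (m+1) → ℝ) (hx : ∀ j, 0 < x j) (i : Fin (2*m+1)) :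
    0 < aconv m x i := by
  have hi := i.isLt
  apply Finset.sum_pos'
  · intro j _
    exact mul_nonneg (ext_nonneg m x (fun j => (hx j).le) _) (ext_nonneg m x (fun j => (hx j).le) _)
  · refine ⟨min i.1 m, by simp [Nat.lt_succ_iff, min_le_left], ?_⟩
    exact mul_pos (ext_pos m x hx (by omega)) (ext_pos m x hx (by omega))

/-- Key reindexing lemma. -/
lemma sum_reindex (m : ℕ) (f : ℕ → ℕ → ℝ) (hf : ∀ a b, m < a ∨ m < b → f a b = 0) :
    ∑ i ∈ range (2*m+1), ∑ j ∈ range (i+1), f (i-j) j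
      = ∑ a ∈ range (m+1), ∑ b ∈ range (m+1), f a b := by
  rw [Finset.sum_sigma']
  have h1 : ((range (2*m+1)).sigma fun i => range (i+1)).sum (fun p => f (p.1 - p.2) p.2)
      = ∑ p ∈ (range (2*m+1) ×ˢ range (2*m+1)).filter (fun p => p.1 + p.2 < 2*m+1),
          f p.1 p.2 := by
    refine Finset.sum_nbij' (fun p => (p.1 - p.2, p.2)) (fun q => ⟨q.1 + q.2, q.2⟩) ?_ ?_ ?_ ?_ ?_
    · intro a ha
      simp only [Finset.mem_sigma, Finset.mem_range] at ha
      simp only [Finset.mem_filter, Finset.mem_product, Finset.mem_range]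
      omega
    · intro a ha
      simp only [Finset.mem_filter, Finset.mem_product, Finset.mem_range] at ha
      simp only [Finset.mem_sigma, Finset.mem_range]
      omega
    · intro a ha
      simp only [Finset.mem_sigma, Finset.mem_range] at ha
      ext <;> simp <;> omega
    · intro a ha; simp
    · intro a ha; rfl
  rw [h1]
  rw [Finset.sum_filter]
  have h2 : ∑ p ∈ (range (2*m+1) ×ˢ range (2*m+1)), (if p.1 + p.2 < 2*m+1 then f p.1 p.2 else 0)
      = ∑ p ∈ (range (2*m+1) ×ˢ range (2*m+1)), f p.1 p.2 := by
    apply Finset.sum_congr rfl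
    intro p hp
    split
    · rfl
    · rename_i h; rw [hf p.1 p.2 (by omega)]
  rw [h2, ← Finset.sum_product']
  symm
  apply Finset.sum_subset
  · intro p hp
    simp only [Finset.mem_product, Finset.mem_range] at *
    omega
  · intro p hp hnp
    simp only [Finset.mem_product, Finset.mem_range] at *
    exact hf p.1 p.2 (by omega)

/-- Fin-indexed version of the reindexing. -/
lemma sum_reindex' (m : ℕ) (x : Fin (m+1) → ℝ) (G : Fin (2*m+1) → ℝ) (L : ℕ → ℝ) :
    ∑ i : Fin (2*m+1), G i * ∑ j ∈ range (i.1+1), ext m x (i.1-j) * ext m x j * (L (i.1-j) + L j)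
      = ∑ ℓ : Fin (m+1), ∑ j : Fin (m+1), x ℓ * x j * (L ℓ.1 + L j.1) * G (idx m ℓ j) := by
  have key := sum_reindex m
    (fun a b => (if h : a + b < 2*m+1 then G ⟨a+b, h⟩ else 0) * (ext m x a * ext m x b * (L a + L b)))
    (by intro a b hab
        rcases hab with h | h
        · rw [ext_zero m x h]; ring
        · rw [ext_zero m x h]; ring)
  calc ∑ i : Fin (2*m+1), G i * ∑ j ∈ range (i.1+1), ext m x (i.1-j) * ext m x j * (L (i.1-j) + L j)
      = ∑ i ∈ range (2*m+1), ∑ j ∈ range (i+1),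
          (if h : (i-j) + j < 2*m+1 then G ⟨(i-j)+j, h⟩ else 0) *
            (ext m x (i-j) * ext m x j * (L (i-j) + L j)) := by
        rw [← Fin.sum_univ_eq_sum_range (fun i =>
          ∑ j ∈ range (i+1), (if h : (i-j) + j < 2*m+1 then G ⟨(i-j)+j, h⟩ else 0) *
            (ext m x (i-j) * ext m x j * (L (i-j) + L j))) (2*m+1)]
        apply Finset.sum_congr rfl
        intro i _
        rw [Finset.mul_sum]
        apply Finset.sum_congr rfl
        intro j hj
        simp only [Finset.mem_range] at hj
        have hij : (i.1 - j) + j = i.1 := by omega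
        rw [dif_pos (by omega : (i.1-j)+j < 2*m+1)]
        have hGi : ∀ (h : i.1 - j + j < 2*m+1), G ⟨i.1 - j + j, h⟩ = G i := by
          intro h
          congr 1
          exact Fin.eq_of_val_eq hij
        rw [hGi]
    _ = ∑ a ∈ range (m+1), ∑ b ∈ range (m+1),
          (if h : a + b < 2*m+1 then G ⟨a+b, h⟩ else 0) *
            (ext m x a * ext m x b * (L a + L b)) := key
    _ = ∑ ℓ : Fin (m+1), ∑ j : Fin (m+1), x ℓ * x j * (L ℓ.1 + L j.1) * G (idx m ℓ j) := by
        rw [← Fin.sum_univ_eq_sum_range (fun a => ∑ b ∈ range (m+1),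
          (if h : a + b < 2*m+1 then G ⟨a+b, h⟩ else 0) * (ext m x a * ext m x b * (L a + L b))) (m+1)]
        apply Finset.sum_congr rfl
        intro ℓ _
        rw [← Fin.sum_univ_eq_sum_range (fun b =>
          (if h : ℓ.1 + b < 2*m+1 then G ⟨ℓ.1+b, h⟩ else 0) * (ext m x ℓ.1 * ext m x b * (L ℓ.1 + L b))) (m+1)]
        apply Finset.sum_congr rfl
        intro j _
        rw [dif_pos (by have := ℓ.isLt; have := j.isLt; omega)]
        unfold _root_.ext idx
        rw [dif_pos ℓ.isLt, dif_pos j.isLt]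
        simp only [Fin.eta]
        ring

lemma sum_reindex2 (m : ℕ) (x : Fin (m+1) → ℝ) (G : Fin (2*m+1) → ℝ) :
    ∑ i : Fin (2*m+1), G i * aconv m x i
      = ∑ ℓ : Fin (m+1), ∑ j : Fin (m+1), x ℓ * x j * G (idx m ℓ j) := by
  have h := sum_reindex' m x G (fun _ => (1:ℝ)/2)
  norm_num at h
  calc ∑ i : Fin (2*m+1), G i * aconv m x i
      = ∑ i : Fin (2*m+1), G i * ∑ j ∈ range (i.1+1), ext m x (i.1-j) * ext m x j := rfl
    _ = ∑ ℓ : Fin (m+1), ∑ j : Fin (m+1), x ℓ * x j * G (idx m ℓ j) := h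

lemma sum_aconv (m : ℕ) (x : Fin (m+1) → ℝ) :
    ∑ i, aconv m x i = (∑ j, x j)^2 := by
  have h := sum_reindex2 m x (fun _ => 1)
  simp only [one_mul, mul_one] at h
  rw [h, sq, Finset.sum_mul_sum]

lemma idx_symm (m : ℕ) (ℓ j : Fin (m+1)) : idx m ℓ j = idx m j ℓ := by
  unfold idx; congr 1; omega

lemma sum_xya (m : ℕ) (y : Fin (2*m+1) → ℝ) (x : Fin (m+1) → ℝ) (hx : ∀ j, 0 < x j) :
    ∑ ℓ : Fin (m+1), ∑ j : Fin (m+1),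
        x ℓ * x j * (y (idx m ℓ j) / aconv m x (idx m ℓ j)) = ∑ i, y i := by
  have h := sum_reindex2 m x (fun i => y i / aconv m x i)
  rw [← h]
  apply Finset.sum_congr rfl
  intro i _
  rw [div_mul_cancel₀]
  exact (aconv_pos m x hx i).ne'

lemma sum_y_pos (m : ℕ) (y : Fin (2*m+1) → ℝ) (hy : ∀ i, 0 < y i) : 0 < ∑ i, y i :=
  Finset.sum_pos (fun i _ => hy i) Finset.univ_nonempty

lemma sqrt_sum_y_pos (m : ℕ) (y : Fin (2*m+1) → ℝ) (hy : ∀ i, 0 < y i) :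
    0 < Real.sqrt (∑ i, y i) := Real.sqrt_pos.2 (sum_y_pos m y hy)

lemma Tmap_pos (m : ℕ) (y : Fin (2*m+1) → ℝ) (hy : ∀ i, 0 < y i)
    (x : Fin (m+1) → ℝ) (hx : ∀ j, 0 < x j) (j : Fin (m+1)) : 0 < Tmap m y x j := by
  have hc := sqrt_sum_y_pos m y hy
  unfold Tmap
  apply mul_pos (mul_pos (hx j) (one_div_pos.2 hc))
  apply Finset.sum_pos _ Finset.univ_nonempty
  intro ℓ _
  exact div_pos (mul_pos (hx ℓ) (hy _)) (aconv_pos m x hx _)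

lemma sum_Tmap (m : ℕ) (y : Fin (2*m+1) → ℝ) (hy : ∀ i, 0 < y i)
    (x : Fin (m+1) → ℝ) (hx : ∀ j, 0 < x j) :
    ∑ j, Tmap m y x j = Real.sqrt (∑ i, y i) := by
  have hc := sqrt_sum_y_pos m y hy
  unfold Tmap
  have : ∑ j : Fin (m+1), x j * (1 / Real.sqrt (∑ i, y i)) *
        ∑ ℓ : Fin (m+1), x ℓ * y (idx m ℓ j) / aconv m x (idx m ℓ j)
      = (1 / Real.sqrt (∑ i, y i)) * ∑ j : Fin (m+1), ∑ ℓ : Fin (m+1),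
          x j * x ℓ * (y (idx m j ℓ) / aconv m x (idx m j ℓ)) := by
    rw [Finset.mul_sum]
    apply Finset.sum_congr rfl
    intro j _
    rw [Finset.mul_sum, Finset.mul_sum]
    apply Finset.sum_congr rfl
    intro ℓ _
    rw [idx_symm m j ℓ]
    ring
  rw [this, sum_xya m y x hx]
  rw [one_div, inv_mul_eq_div, Real.div_sqrt]

lemma stepA (m : ℕ) (x x' : Fin (m+1) → ℝ) (hx : ∀ j, 0 < x j) (hx' : ∀ j, 0 < x' j)
    (i : Fin (2*m+1)) :
    ∑ j ∈ range (i.1+1), ext m x (i.1-j) * ext m x j *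
        (Real.log (ext m x' (i.1-j) / ext m x (i.1-j)) + Real.log (ext m x' j / ext m x j))
      ≤ aconv m x i * (Real.log (aconv m x' i) - Real.log (aconv m x i)) := by
  have ha : 0 < aconv m x i := aconv_pos m x hx i
  have ha' : 0 < aconv m x' i := aconv_pos m x' hx' i
  have key : ∀ j ∈ range (i.1+1),
      ext m x (i.1-j) * ext m x j *
          (Real.log (ext m x' (i.1-j) / ext m x (i.1-j)) + Real.log (ext m x' j / ext m x j))
        ≤ ext m x' (i.1-j) * ext m x' j * (aconv m x i / aconv m x' i)
            - ext m x (i.1-j) * ext m x j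
            + ext m x (i.1-j) * ext m x j *
                (Real.log (aconv m x' i) - Real.log (aconv m x i)) := by
    intro j _
    by_cases hab : i.1 - j ≤ m ∧ j ≤ m
    · obtain ⟨ha1, hb1⟩ := hab
      have p1 : 0 < ext m x (i.1-j) := ext_pos m x hx ha1
      have p2 : 0 < ext m x j := ext_pos m x hx hb1
      have q1 : 0 < ext m x' (i.1-j) := ext_pos m x' hx' ha1
      have q2 : 0 < ext m x' j := ext_pos m x' hx' hb1
      set A := ext m x (i.1-j)
      set B := ext m x j
      set C := ext m x' (i.1-j)
      set D := ext m x' j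
      have hlog : Real.log (C/A) + Real.log (D/B)
          = Real.log ((C*D*aconv m x i)/(A*B*aconv m x' i))
              + (Real.log (aconv m x' i) - Real.log (aconv m x i)) := by
        rw [Real.log_div q1.ne' p1.ne', Real.log_div q2.ne' p2.ne',
          Real.log_div (by positivity) (by positivity),
          Real.log_mul (by positivity) ha.ne', Real.log_mul (by positivity) ha'.ne',
          Real.log_mul q1.ne' q2.ne', Real.log_mul p1.ne' p2.ne']
        ring
      have hle : Real.log ((C*D*aconv m x i)/(A*B*aconv m x' i))
          ≤ (C*D*aconv m x i)/(A*B*aconv m x' i) - 1 :=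
        Real.log_le_sub_one_of_pos (by positivity)
      calc A * B * (Real.log (C/A) + Real.log (D/B))
          = A * B * (Real.log ((C*D*aconv m x i)/(A*B*aconv m x' i))
              + (Real.log (aconv m x' i) - Real.log (aconv m x i))) := by rw [hlog]
        _ ≤ A * B * ((C*D*aconv m x i)/(A*B*aconv m x' i) - 1
              + (Real.log (aconv m x' i) - Real.log (aconv m x i))) := by
            apply mul_le_mul_of_nonneg_left (by linarith) (by positivity)
        _ = C * D * (aconv m x i / aconv m x' i) - A * B
              + A * B * (Real.log (aconv m x' i) - Real.log (aconv m x i)) := by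
            field_simp
    · have h0 : ext m x (i.1-j) * ext m x j = 0 := by
        rcases not_and_or.1 hab with h | h
        · rw [ext_zero m x (k := i.1-j) (by omega)]; ring
        · rw [ext_zero m x (k := j) (by omega)]; ring
      have h0' : ext m x' (i.1-j) * ext m x' j = 0 := by
        rcases not_and_or.1 hab with h | h
        · rw [ext_zero m x' (k := i.1-j) (by omega)]; ring
        · rw [ext_zero m x' (k := j) (by omega)]; ring
      rw [h0, h0']
      simp
  calc ∑ j ∈ range (i.1+1), ext m x (i.1-j) * ext m x j *
        (Real.log (ext m x' (i.1-j) / ext m x (i.1-j)) + Real.log (ext m x' j / ext m x j))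
      ≤ ∑ j ∈ range (i.1+1),
          (ext m x' (i.1-j) * ext m x' j * (aconv m x i / aconv m x' i)
            - ext m x (i.1-j) * ext m x j
            + ext m x (i.1-j) * ext m x j *
                (Real.log (aconv m x' i) - Real.log (aconv m x i))) :=
        Finset.sum_le_sum key
    _ = (∑ j ∈ range (i.1+1), ext m x' (i.1-j) * ext m x' j) * (aconv m x i / aconv m x' i)
          - (∑ j ∈ range (i.1+1), ext m x (i.1-j) * ext m x j)
          + (∑ j ∈ range (i.1+1), ext m x (i.1-j) * ext m x j) *
              (Real.log (aconv m x' i) - Real.log (aconv m x i)) := by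
        rw [Finset.sum_add_distrib, Finset.sum_sub_distrib, ← Finset.sum_mul, ← Finset.sum_mul]
    _ = aconv m x' i * (aconv m x i / aconv m x' i) - aconv m x i
          + aconv m x i * (Real.log (aconv m x' i) - Real.log (aconv m x i)) := rfl
    _ = aconv m x i * (Real.log (aconv m x' i) - Real.log (aconv m x i)) := by
        rw [mul_div_cancel₀ _ ha'.ne']
        ring

lemma main_step (m : ℕ) (y : Fin (2*m+1) → ℝ) (hy : ∀ i, 0 < y i)
    (x : Fin (m+1) → ℝ) (hx : ∀ j, 0 < x j) :
    2 * Real.sqrt (∑ i, y i) *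
        (∑ j, Tmap m y x j * Real.log (Tmap m y x j / x j))
      ≤ ∑ i, y i * (Real.log (aconv m (Tmap m y x) i) - Real.log (aconv m x i)) := by
  set c := Real.sqrt (∑ i, y i) with hc_def
  have hc : 0 < c := sqrt_sum_y_pos m y hy
  set x' := Tmap m y x with hx'_def
  have hx' : ∀ j, 0 < x' j := Tmap_pos m y hy x hx
  set L : ℕ → ℝ := fun k => Real.log (ext m x' k / ext m x k) with hL
  have h1 := sum_reindex' m x (fun i => y i / aconv m x i) L
  -- upper bound on LHS of h1
  have h2 : ∑ i : Fin (2*m+1), (y i / aconv m x i) *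
        ∑ j ∈ range (i.1+1), ext m x (i.1-j) * ext m x j * (L (i.1-j) + L j)
      ≤ ∑ i, y i * (Real.log (aconv m x' i) - Real.log (aconv m x i)) := by
    apply Finset.sum_le_sum
    intro i _
    have ha : 0 < aconv m x i := aconv_pos m x hx i
    have hA := stepA m x x' hx hx' i
    calc (y i / aconv m x i) *
          ∑ j ∈ range (i.1+1), ext m x (i.1-j) * ext m x j * (L (i.1-j) + L j)
        ≤ (y i / aconv m x i) *
            (aconv m x i * (Real.log (aconv m x' i) - Real.log (aconv m x i))) :=
          mul_le_mul_of_nonneg_left hA (div_nonneg (hy i).le ha.le)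
      _ = y i * (Real.log (aconv m x' i) - Real.log (aconv m x i)) := by
          field_simp
  -- identify RHS of h1
  have h3 : ∑ ℓ : Fin (m+1), ∑ j : Fin (m+1),
        x ℓ * x j * (L ℓ.1 + L j.1) * (y (idx m ℓ j) / aconv m x (idx m ℓ j))
      = 2 * c * ∑ j, x' j * Real.log (x' j / x j) := by
    have hsplit : ∀ ℓ j : Fin (m+1),
        x ℓ * x j * (L ℓ.1 + L j.1) * (y (idx m ℓ j) / aconv m x (idx m ℓ j))
          = x ℓ * x j * L ℓ.1 * (y (idx m ℓ j) / aconv m x (idx m ℓ j))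
            + x ℓ * x j * L j.1 * (y (idx m ℓ j) / aconv m x (idx m ℓ j)) := by
      intro ℓ j; ring
    simp only [hsplit, Finset.sum_add_distrib]
    have hswap : ∑ ℓ : Fin (m+1), ∑ j : Fin (m+1),
          x ℓ * x j * L ℓ.1 * (y (idx m ℓ j) / aconv m x (idx m ℓ j))
        = ∑ ℓ : Fin (m+1), ∑ j : Fin (m+1),
          x ℓ * x j * L j.1 * (y (idx m ℓ j) / aconv m x (idx m ℓ j)) := by
      rw [Finset.sum_comm]
      apply Finset.sum_congr rfl; intro ℓ _
      apply Finset.sum_congr rfl; intro j _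
      rw [idx_symm m j ℓ]; ring
    rw [hswap, ← two_mul]
    have hinner : ∀ j : Fin (m+1),
        ∑ ℓ : Fin (m+1), x ℓ * x j * L j.1 * (y (idx m ℓ j) / aconv m x (idx m ℓ j))
          = c * x' j * L j.1 := by
      intro j
      have hT : x' j = x j * (1 / c) * ∑ ℓ, x ℓ * y (idx m ℓ j) / aconv m x (idx m ℓ j) := rfl
      have : ∑ ℓ : Fin (m+1), x ℓ * x j * L j.1 * (y (idx m ℓ j) / aconv m x (idx m ℓ j))
          = (x j * L j.1) * ∑ ℓ, x ℓ * y (idx m ℓ j) / aconv m x (idx m ℓ j) := by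
        rw [Finset.mul_sum]
        apply Finset.sum_congr rfl; intro ℓ _; ring
      rw [this, hT]
      field_simp
    have hLval : ∀ j : Fin (m+1), L j.1 = Real.log (x' j / x j) := by
      intro j
      simp only [hL]
      unfold _root_.ext
      rw [dif_pos j.isLt, dif_pos j.isLt]
    rw [← Finset.sum_comm]
    calc 2 * ∑ j : Fin (m+1), ∑ ℓ : Fin (m+1),
          x ℓ * x j * L j.1 * (y (idx m ℓ j) / aconv m x (idx m ℓ j))
        = 2 * ∑ j : Fin (m+1), c * x' j * L j.1 := by
          congr 1; exact Finset.sum_congr rfl (fun j _ => hinner j)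
      _ = 2 * c * ∑ j, x' j * Real.log (x' j / x j) := by
          rw [Finset.mul_sum]
          rw [Finset.mul_sum]
          apply Finset.sum_congr rfl
          intro j _
          rw [hLval j]; ring
  rw [h1] at h2
  rw [h3] at h2
  exact h2

lemma term_nonneg {a b : ℝ} (ha : 0 < a) (hb : 0 < b) :
    0 ≤ a * Real.log (a / b) - a + b := by
  have h := Real.log_le_sub_one_of_pos (div_pos hb ha)
  have h2 : a * Real.log (b/a) ≤ a * (b/a - 1) := mul_le_mul_of_nonneg_left h ha.le
  have h3 : a * (b/a - 1) = b - a := by field_simp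
  have h4 : Real.log (a/b) = - Real.log (b/a) := by rw [← Real.log_inv, inv_div]
  nlinarith [h2, h3, h4]

lemma IdivR_nonneg {n : ℕ} (u v : Fin n → ℝ) (hu : ∀ j, 0 < u j) (hv : ∀ j, 0 < v j) :
    0 ≤ IdivR u v := by
  apply Finset.sum_nonneg
  intro j _
  exact term_nonneg (hu j) (hv j)

lemma descent (m : ℕ) (y : Fin (2*m+1) → ℝ) (hy : ∀ i, 0 < y i)
    (x : Fin (m+1) → ℝ) (hx : ∀ j, 0 < x j) :
    IdivR y (aconv m (Tmap m y x)) + 2 * Real.sqrt (∑ i, y i) * IdivR (Tmap m y x) x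
      ≤ IdivR y (aconv m x) := by
  set c := Real.sqrt (∑ i, y i) with hc_def
  have hc : 0 < c := sqrt_sum_y_pos m y hy
  have hcsq : c^2 = ∑ i, y i := Real.sq_sqrt (sum_y_pos m y hy).le
  set x' := Tmap m y x with hx'_def
  have hx' : ∀ j, 0 < x' j := Tmap_pos m y hy x hx
  have hmain := main_step m y hy x hx
  have hsx' : ∑ j, x' j = c := sum_Tmap m y hy x hx
  have hsa : ∑ i, aconv m x i = (∑ j, x j)^2 := sum_aconv m x
  have hsa' : ∑ i, aconv m x' i = c^2 := by rw [sum_aconv m x', hsx']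
  -- expand IdivR
  unfold IdivR
  have hexp : ∀ (z : Fin (m+1) → ℝ), (∀ j, 0 < z j) →
      ∑ i, (y i * Real.log (y i / aconv m z i) - y i + aconv m z i)
        = (∑ i, y i * (Real.log (y i) - Real.log (aconv m z i))) - (∑ i, y i)
            + ∑ i, aconv m z i := by
    intro z hz
    rw [Finset.sum_add_distrib, Finset.sum_sub_distrib]
    congr 2
    apply Finset.sum_congr rfl
    intro i _
    rw [Real.log_div (hy i).ne' (aconv_pos m z hz i).ne']
  rw [hexp x hx, hexp x' hx']
  have hdiff : (∑ i, y i * (Real.log (y i) - Real.log (aconv m x' i)))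
      - (∑ i, y i * (Real.log (y i) - Real.log (aconv m x i)))
      = - ∑ i, y i * (Real.log (aconv m x' i) - Real.log (aconv m x i)) := by
    rw [← Finset.sum_sub_distrib, ← Finset.sum_neg_distrib]
    apply Finset.sum_congr rfl
    intro i _; ring
  have hI : ∑ j, (x' j * Real.log (x' j / x j) - x' j + x j)
      = (∑ j, x' j * Real.log (x' j / x j)) - c + ∑ j, x j := by
    rw [Finset.sum_add_distrib, Finset.sum_sub_distrib, hsx']
  rw [hI, hsa, hsa']
  nlinarith [hmain, sq_nonneg ((∑ j, x j) - c), hdiff]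

lemma term_ge_sq {a b : ℝ} (ha : 0 < a) (hb : 0 < b) :
    (Real.sqrt a - Real.sqrt b)^2 ≤ a * Real.log (a/b) - a + b := by
  set u := Real.sqrt (b/a) with hu_def
  have hu : 0 < u := Real.sqrt_pos.2 (div_pos hb ha)
  have h1 : Real.log u ≤ u - 1 := Real.log_le_sub_one_of_pos hu
  have h2 : Real.log (a/b) = -2 * Real.log u := by
    have hab : Real.log (a/b) = - Real.log (b/a) := by rw [← Real.log_inv, inv_div]
    rw [hab, hu_def, Real.log_sqrt (div_pos hb ha).le]
    ring
  have h3 : Real.sqrt a * Real.sqrt b = a * u := by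
    rw [hu_def, ← Real.sqrt_mul ha.le, ← Real.sqrt_mul_self ha.le]
    rw [← Real.sqrt_mul (by positivity)]
    congr 1
    field_simp
    ring
    rw [Real.sq_sqrt (by positivity)]
  have h4 : (Real.sqrt a)^2 = a := Real.sq_sqrt ha.le
  have h5 : (Real.sqrt b)^2 = b := Real.sq_sqrt hb.le
  have h6 : a * Real.log u ≤ a * (u - 1) := mul_le_mul_of_nonneg_left h1 ha.le
  nlinarith [h2, h3, h4, h5, h6]

lemma l1_sq_le {n : ℕ} (u v : Fin n → ℝ) (hu : ∀ j, 0 < u j) (hv : ∀ j, 0 < v j) :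
    (∑ j, |u j - v j|)^2 ≤ (2 * (∑ j, u j) + 2 * ∑ j, v j) * IdivR u v := by
  have cs := Finset.sum_mul_sq_le_sq_mul_sq Finset.univ
    (fun j => |Real.sqrt (u j) - Real.sqrt (v j)|) (fun j => Real.sqrt (u j) + Real.sqrt (v j))
  have e1 : ∑ j, |Real.sqrt (u j) - Real.sqrt (v j)| * (Real.sqrt (u j) + Real.sqrt (v j))
      = ∑ j, |u j - v j| := by
    apply Finset.sum_congr rfl
    intro j _
    have h1 := Real.sq_sqrt (hu j).le
    have h2 := Real.sq_sqrt (hv j).le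
    have hmul : (Real.sqrt (u j) - Real.sqrt (v j)) * (Real.sqrt (u j) + Real.sqrt (v j))
        = u j - v j := by linear_combination h1 - h2
    rw [← abs_of_nonneg (by positivity : (0:ℝ) ≤ Real.sqrt (u j) + Real.sqrt (v j)),
      ← abs_mul, hmul]
  have e2 : ∑ j, |Real.sqrt (u j) - Real.sqrt (v j)|^2 ≤ IdivR u v := by
    apply Finset.sum_le_sum
    intro j _
    rw [sq_abs]
    exact term_ge_sq (hu j) (hv j)
  have e3 : ∑ j, (Real.sqrt (u j) + Real.sqrt (v j))^2 ≤ 2 * (∑ j, u j) + 2 * ∑ j, v j := by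
    rw [Finset.mul_sum, Finset.mul_sum, ← Finset.sum_add_distrib]
    apply Finset.sum_le_sum
    intro j _
    have h1 := Real.sq_sqrt (hu j).le
    have h2 := Real.sq_sqrt (hv j).le
    nlinarith [sq_nonneg (Real.sqrt (u j) - Real.sqrt (v j))]
  rw [e1] at cs
  have hfnn : (0:ℝ) ≤ ∑ j, |Real.sqrt (u j) - Real.sqrt (v j)|^2 :=
    Finset.sum_nonneg (fun j _ => sq_nonneg _)
  have hgnn : (0:ℝ) ≤ ∑ j, (Real.sqrt (u j) + Real.sqrt (v j))^2 :=
    Finset.sum_nonneg (fun j _ => sq_nonneg _)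
  calc (∑ j, |u j - v j|)^2
      ≤ (∑ j, |Real.sqrt (u j) - Real.sqrt (v j)|^2) * ∑ j, (Real.sqrt (u j) + Real.sqrt (v j))^2 := cs
    _ ≤ IdivR u v * (2 * (∑ j, u j) + 2 * ∑ j, v j) := by
        apply mul_le_mul e2 e3 hgnn
        exact le_trans hfnn e2
    _ = (2 * (∑ j, u j) + 2 * ∑ j, v j) * IdivR u v := by ring


/-- along the iterates of the algorithm, `I(x^{t+1}‖x^t) → 0` and
`∑_j |x^{t+1}_j − x^t_j| → 0`. -/
theorem stmt15 (m : ℕ) (y : Fin (2 * m + 1) → ℝ) (hy : ∀ i, 0 < y i)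
    (xs : ℕ → Fin (m + 1) → ℝ) (h0 : ∀ j, 0 < xs 0 j)
    (hstep : ∀ t, xs (t + 1) = Tmap m y (xs t)) :
    Filter.Tendsto (fun t => IdivR (xs (t + 1)) (xs t)) Filter.atTop (nhds 0) ∧
    Filter.Tendsto (fun t => ∑ j, |xs (t + 1) j - xs t j|) Filter.atTop (nhds 0) := by
  have hxpos : ∀ t j, 0 < xs t j := by
    intro t
    induction t with
    | zero => exact h0
    | succ s ih => rw [hstep s]; exact Tmap_pos m y hy (xs s) ih
  set c := Real.sqrt (∑ i, y i) with hc_def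
  have hc : 0 < c := sqrt_sum_y_pos m y hy
  set F : ℕ → ℝ := fun t => IdivR y (aconv m (xs t)) with hF
  set D : ℕ → ℝ := fun t => IdivR (xs (t+1)) (xs t) with hD
  have hDnn : ∀ t, 0 ≤ D t := fun t => IdivR_nonneg _ _ (hxpos (t+1)) (hxpos t)
  have hdes : ∀ t, F (t+1) + 2*c*D t ≤ F t := by
    intro t
    have h := descent m y hy (xs t) (hxpos t)
    rw [← hstep t] at h
    exact h
  have hFnn : ∀ t, 0 ≤ F t :=
    fun t => IdivR_nonneg y _ hy (fun i => aconv_pos m (xs t) (hxpos t) i)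
  have hFanti : Antitone F := antitone_nat_of_succ_le (fun t => by nlinarith [hdes t, hDnn t, hc])
  have hbdd : BddBelow (Set.range F) := ⟨0, by rintro _ ⟨t, rfl⟩; exact hFnn t⟩
  have hlim := tendsto_atTop_ciInf hFanti hbdd
  have hlim' : Tendsto (fun t => F (t+1)) atTop (nhds (⨅ i, F i)) :=
    hlim.comp (tendsto_add_atTop_nat 1)
  have hdiff : Tendsto (fun t => F t - F (t+1)) atTop (nhds 0) := by
    have h := hlim.sub hlim'
    simpa using h
  have hDto : Tendsto D atTop (nhds 0) := by
    apply squeeze_zero hDnn (g := fun t => (F t - F (t+1)) / (2*c))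
    · intro t
      rw [le_div_iff₀ (by positivity)]
      nlinarith [hdes t]
    · simpa using hdiff.div_const (2*c)
  refine ⟨hDto, ?_⟩
  have hmass : ∀ t, ∑ j, xs (t+1) j = c := by
    intro t
    rw [hstep t]
    exact sum_Tmap m y hy (xs t) (hxpos t)
  apply squeeze_zero' (g := fun t => Real.sqrt (4*c*D t))
  · exact Eventually.of_forall (fun t => Finset.sum_nonneg (fun j _ => abs_nonneg _))
  · filter_upwards [eventually_ge_atTop 1] with t ht
    obtain ⟨s, rfl⟩ : ∃ s, t = s + 1 := ⟨t-1, by omega⟩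
    have hsq := l1_sq_le (xs (s+2)) (xs (s+1)) (hxpos _) (hxpos _)
    rw [hmass (s+1), hmass s] at hsq
    have hg : (0:ℝ) ≤ ∑ j, |xs (s+2) j - xs (s+1) j| :=
      Finset.sum_nonneg (fun j _ => abs_nonneg _)
    calc ∑ j, |xs (s+1+1) j - xs (s+1) j|
        = Real.sqrt ((∑ j, |xs (s+2) j - xs (s+1) j|)^2) := (Real.sqrt_sq hg).symm
      _ ≤ Real.sqrt (4*c*D (s+1)) := by
          apply Real.sqrt_le_sqrt
          calc (∑ j, |xs (s+2) j - xs (s+1) j|)^2 ≤ (2*c + 2*c) * D (s+1) := hsq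
            _ = 4*c*D (s+1) := by ring
  · have h := hDto.const_mul (4*c)
    have h2 : Tendsto (fun t => 4*c*D t) atTop (nhds 0) := by simpa using h
    have h3 := h2.sqrt
    simpa using h3
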